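/- In the special case of the proof of the previous proposition: let L be a finite-dimensional complex Leibniz algebra with Levi decomposition L = S ∔ R where S is a simple Lie algebra and I (the ideal of squares) is a simple S-module, and let b ∈ N satisfy [S, b] ⊆ I and [S, b] ≠ 0. Then (R_b)² restricted to S is zero, i.e. [[x,b],b] = 0 for all x ∈ S. -/

import Mathlib

open Finset

variable {F L : Type} [Field F] [AddCommGroup L] [Module F L]

/-- The span of all brackets `[a,b]` with `a ∈ A`, `b ∈ B`. -/
def brSpan (br : L →ₗ[F] L →ₗ[F] L) (A B : Submodule F L) : Submodule F L :=
  Submodule.span F {z | ∃ a ∈ A, ∃ b ∈ B, z = br a b}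

/-- The subspace `I` spanned by all squares `[x,x]`. -/
def sqIdeal (br : L →ₗ[F] L →ₗ[F] L) : Submodule F L :=
  Submodule.span F {z | ∃ x : L, z = br x x}

/-- `K` is a two-sided ideal of the Leibniz algebra. -/
def IsIdeal (br : L →ₗ[F] L →ₗ[F] L) (K : Submodule F L) : Prop :=
  ∀ x ∈ K, ∀ y : L, br x y ∈ K ∧ br y x ∈ K

/-- Lower central series of a subspace `K`. -/
def lcs (br : L →ₗ[F] L →ₗ[F] L) (K : Submodule F L) : ℕ → Submodule F L
  | 0 => K
  | n + 1 => brSpan br (lcs br K n) K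

/-- Derived series of a subspace `K`. -/
def derSer (br : L →ₗ[F] L →ₗ[F] L) (K : Submodule F L) : ℕ → Submodule F L
  | 0 => K
  | n + 1 => brSpan br (derSer br K n) (derSer br K n)

def IsNilpotentSub (br : L →ₗ[F] L →ₗ[F] L) (K : Submodule F L) : Prop :=
  ∃ n, lcs br K n = ⊥

def IsSolvableSub (br : L →ₗ[F] L →ₗ[F] L) (K : Submodule F L) : Prop :=
  ∃ n, derSer br K n = ⊥

/-- `N` is the nilradical: the maximal nilpotent ideal. -/
def IsNilradical (br : L →ₗ[F] L →ₗ[F] L) (N : Submodule F L) : Prop :=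
  IsIdeal br N ∧ IsNilpotentSub br N ∧
    ∀ K : Submodule F L, IsIdeal br K → IsNilpotentSub br K → K ≤ N

/-- `R` is the solvable radical: the maximal solvable ideal. -/
def IsSolvRadical (br : L →ₗ[F] L →ₗ[F] L) (R : Submodule F L) : Prop :=
  IsIdeal br R ∧ IsSolvableSub br R ∧
    ∀ K : Submodule F L, IsIdeal br K → IsSolvableSub br K → K ≤ R

/-- `S` is a Lie subalgebra (closed under the bracket, which is antisymmetric on it). -/
def IsLieSubalg (br : L →ₗ[F] L →ₗ[F] L) (S : Submodule F L) : Prop :=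
  (∀ x ∈ S, ∀ y ∈ S, br x y ∈ S) ∧ ∀ x ∈ S, ∀ y ∈ S, br x y = - br y x

/-- `K` is an ideal of the subalgebra `S`. -/
def IsIdealIn (br : L →ₗ[F] L →ₗ[F] L) (S K : Submodule F L) : Prop :=
  K ≤ S ∧ ∀ x ∈ K, ∀ y ∈ S, br x y ∈ K ∧ br y x ∈ K

/-- `S` is a semisimple Lie subalgebra: a Lie subalgebra with no nonzero solvable ideals. -/
def IsSemisimpleSubalg (br : L →ₗ[F] L →ₗ[F] L) (S : Submodule F L) : Prop :=
  IsLieSubalg br S ∧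
    ∀ K : Submodule F L, IsIdealIn br S K → IsSolvableSub br K → K = ⊥

/-- `L = S ∔ R` is a Levi decomposition: `S` a semisimple Lie subalgebra, `R` the solvable
radical, and `L` the direct (vector-space) sum of `S` and `R`. -/
def IsLeviDecomp (br : L →ₗ[F] L →ₗ[F] L) (S R : Submodule F L) : Prop :=
  IsSemisimpleSubalg br S ∧ IsSolvRadical br R ∧ S ⊓ R = ⊥ ∧ S ⊔ R = ⊤

/-- `θ` restricts to an `S`-module homomorphism from `S` into `Tgt`
(the `S`-module structure being the right action). -/
def IsModHom (br : L →ₗ[F] L →ₗ[F] L) (S Tgt : Submodule F L) (θ : L →ₗ[F] L) : Prop :=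
  (∀ x ∈ S, θ x ∈ Tgt) ∧ ∀ x ∈ S, ∀ y ∈ S, θ (br x y) = br (θ x) y

/-- The Levi subalgebra `S_θ = {x + θ(x) : x ∈ S}`. -/
def Stheta (S : Submodule F L) (θ : L →ₗ[F] L) : Set L :=
  {z | ∃ x ∈ S, z = x + θ x}

/-- The exponential of a nilpotent endomorphism `D` with `D ^ n = 0`, as a finite sum. -/
def expSum (D : Module.End F L) (n : ℕ) : Module.End F L :=
  ∑ k ∈ Finset.range n, ((k.factorial : F)⁻¹) • D ^ k

/-- Inner automorphisms: compositions of maps `exp(R_a)` with `a ∈ N`. -/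
inductive IsInnerAut (br : L →ₗ[F] L →ₗ[F] L) (N : Submodule F L) : Module.End F L → Prop
  | id : IsInnerAut br N 1
  | comp (a : L) (ha : a ∈ N) (n : ℕ) (hn : (br.flip a : Module.End F L) ^ n = 0)
      (φ : Module.End F L) (hφ : IsInnerAut br N φ) :
      IsInnerAut br N (expSum (br.flip a) n * φ)

/-- The Levi subalgebra `S` is unique up to conjugation by an inner automorphism. -/
def LeviUnique (br : L →ₗ[F] L →ₗ[F] L) (S R N : Submodule F L) : Prop :=
  ∀ S₁ : Submodule F L, IsLeviDecomp br S₁ R →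
    ∃ φ : Module.End F L, IsInnerAut br N φ ∧ Submodule.map φ S = S₁

/-- `J` is the maximal `S`-submodule of `I` with `Hom_S(S, I) ≡ Hom_S(S, J)`:
the smallest `S`-submodule of `I` containing the image of every `S`-module
homomorphism from `S` into `I`. -/
def IsJmod (br : L →ₗ[F] L →ₗ[F] L) (S J : Submodule F L) : Prop :=
  J ≤ sqIdeal br ∧ (∀ j ∈ J, ∀ s ∈ S, br j s ∈ J) ∧
  (∀ θ : L →ₗ[F] L, IsModHom br S (sqIdeal br) θ → ∀ x ∈ S, θ x ∈ J) ∧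
  ∀ J' : Submodule F L,
    (J' ≤ sqIdeal br ∧ (∀ j ∈ J', ∀ s ∈ S, br j s ∈ J') ∧
      (∀ θ : L →ₗ[F] L, IsModHom br S (sqIdeal br) θ → ∀ x ∈ S, θ x ∈ J')) → J ≤ J'

/-- Membership in `E = {b ∈ N : [S, b] ⊆ I}`. -/
def memE (br : L →ₗ[F] L →ₗ[F] L) (S N : Submodule F L) (b : L) : Prop :=
  b ∈ N ∧ ∀ s ∈ S, br s b ∈ sqIdeal br

/-- The subspace `[S, E]`, the span of all `[s, e]` with `s ∈ S`, `e ∈ E`. -/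
def brSE (br : L →ₗ[F] L →ₗ[F] L) (S N : Submodule F L) : Submodule F L :=
  Submodule.span F {z | ∃ s ∈ S, ∃ e, memE br S N e ∧ z = br s e}

theorem Rb_sq_zero_simple_case (L : Type) [AddCommGroup L] [Module ℂ L] [FiniteDimensional ℂ L]
    (br : L →ₗ[ℂ] L →ₗ[ℂ] L)
    (leib : ∀ x y z : L, br x (br y z) = br (br x y) z - br (br x z) y)
    (S R N : Submodule ℂ L) (hN : IsNilradical br N)
    (hLevi : IsLeviDecomp br S R)
    (hLI : ∀ x : L, ∀ i ∈ sqIdeal br, br x i = 0)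
    (hSsimple : (∃ x ∈ S, ∃ y ∈ S, br x y ≠ 0) ∧
      ∀ K : Submodule ℂ L, IsIdealIn br S K → K = ⊥ ∨ K = S)
    (hIsimple : sqIdeal br ≠ ⊥ ∧
      ∀ K : Submodule ℂ L, K ≤ sqIdeal br → (∀ k ∈ K, ∀ s ∈ S, br k s ∈ K) →
        K = ⊥ ∨ K = sqIdeal br)
    (b : L) (hb : b ∈ N) (hbI : ∀ s ∈ S, br s b ∈ sqIdeal br)
    (hbne : ∃ s ∈ S, br s b ≠ 0) :
    ∀ x ∈ S, br (br x b) b = 0 := by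
  classical
  obtain ⟨⟨hSclosed, hSanti⟩, _⟩ := hLevi.1
  obtain ⟨hIne, hIsimp⟩ := hIsimple
  set I : Submodule ℂ L := sqIdeal br with hIdef
  set Rb : Module.End ℂ L := br.flip b with hRbdef
  have hRb : ∀ x : L, Rb x = br x b := fun x => rfl
  -- every square is in I
  have hsq : ∀ x : L, br x x ∈ I := fun x => Submodule.subset_span ⟨x, rfl⟩
  -- antisymmetry mod I
  have hanti : ∀ a c : L, br a c + br c a ∈ I := by
    intro a c
    have key : br a c + br c a = br (a + c) (a + c) - br a a - br c c := by
      simp only [map_add, LinearMap.add_apply]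
      abel
    rw [key]
    exact I.sub_mem (I.sub_mem (hsq (a + c)) (hsq a)) (hsq c)
  -- I is closed under Rb
  have hIb : ∀ i ∈ I, Rb i ∈ I := by
    intro i hi
    have h0 : br b i = 0 := hLI b i hi
    have : Rb i = br i b + br b i := by rw [hRb, h0, add_zero]
    rw [this]
    exact hanti i b
  have hθI : ∀ x ∈ S, Rb x ∈ I := fun x hx => hbI x hx
  have hθ2I : ∀ x ∈ S, Rb (Rb x) ∈ I := fun x hx => hIb _ (hθI x hx)
  -- equivariance of Rb on S
  have heq1 : ∀ x ∈ S, ∀ y ∈ S, Rb (br x y) = br (Rb x) y := by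
    intro x hx y hy
    have h1 := leib x y b
    have h2 : br x (br y b) = 0 := hLI x _ (hbI y hy)
    rw [h2] at h1
    rw [hRb, hRb]
    exact sub_eq_zero.mp h1.symm
  -- equivariance of Rb ∘ Rb on S
  have heq2 : ∀ x ∈ S, ∀ y ∈ S, Rb (Rb (br x y)) = br (Rb (Rb x)) y := by
    intro x hx y hy
    have h1 := leib (Rb x) y b
    have h2 : br (Rb x) (br y b) = 0 := hLI _ _ (hbI y hy)
    rw [h2] at h1
    rw [heq1 x hx y hy, hRb, hRb, hRb]
    exact sub_eq_zero.mp h1.symm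
  -- kernel of Rb on S is an ideal of S, hence ⊥
  have hinj : ∀ x ∈ S, Rb x = 0 → x = 0 := by
    intro x hxS hx0
    set K0 : Submodule ℂ L := S ⊓ LinearMap.ker Rb with hK0def
    have hK0ideal : IsIdealIn br S K0 := by
      constructor
      · exact inf_le_left
      · rintro u ⟨huS, huK⟩ y hyS
        have huK' : Rb u = 0 := huK
        have h1 : br u y ∈ K0 := by
          refine ⟨hSclosed u huS y hyS, ?_⟩
          show Rb (br u y) = 0
          rw [heq1 u huS y hyS, huK']
          simp
        have h2 : br y u ∈ K0 := by
          have : br y u = -br u y := by rw [hSanti y hyS u huS]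
          rw [this]
          exact K0.neg_mem h1
        exact ⟨h1, h2⟩
    rcases hSsimple.2 K0 hK0ideal with h | h
    · have : x ∈ K0 := ⟨hxS, hx0⟩
      rw [h] at this
      exact this
    · exfalso
      obtain ⟨s, hsS, hsne⟩ := hbne
      have : s ∈ K0 := by rw [h]; exact hsS
      exact hsne this.2
  -- image of S under Rb is all of I
  have hIm : Submodule.map Rb S = I := by
    have hle : Submodule.map Rb S ≤ I := by
      rintro _ ⟨x, hxS, rfl⟩
      exact hθI x hxS
    have hinv : ∀ k ∈ Submodule.map Rb S, ∀ s ∈ S, br k s ∈ Submodule.map Rb S := by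
      rintro _ ⟨x, hxS, rfl⟩ s hsS
      exact ⟨br x s, hSclosed x hxS s hsS, heq1 x hxS s hsS⟩
    rcases hIsimp _ hle hinv with h | h
    · exfalso
      obtain ⟨s, hsS, hsne⟩ := hbne
      have : Rb s ∈ Submodule.map Rb S := ⟨s, hsS, rfl⟩
      rw [h] at this
      exact hsne this
    · exact h
  -- the S-module isomorphism Θ : S ≃ I
  set Θ : ↥S →ₗ[ℂ] ↥I := Rb.restrict hθI with hΘdef
  have hΘapp : ∀ x : ↥S, (Θ x : L) = Rb (x : L) := fun x => rfl
  have hΘbij : Function.Bijective Θ := by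
    constructor
    · intro u v huv
      have : Rb ((u : L) - (v : L)) = 0 := by
        rw [map_sub, sub_eq_zero]
        exact congrArg (Subtype.val) huv
      have := hinj _ (S.sub_mem u.2 v.2) this
      exact Subtype.ext (sub_eq_zero.mp this)
    · rintro ⟨i, hi⟩
      rw [← hIm] at hi
      obtain ⟨x, hxS, hx⟩ := hi
      exact ⟨⟨x, hxS⟩, Subtype.ext hx⟩
  set e : ↥S ≃ₗ[ℂ] ↥I := LinearEquiv.ofBijective Θ hΘbij with hedef
  -- Rb² as a map S → I
  set Θ₂ : ↥S →ₗ[ℂ] ↥I := (Rb ∘ₗ Rb).restrict (fun x hx => hθ2I x hx) with hΘ₂def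
  have hΘ₂app : ∀ x : ↥S, (Θ₂ x : L) = Rb (Rb (x : L)) := fun x => rfl
  set f : Module.End ℂ ↥S := e.symm.toLinearMap ∘ₗ Θ₂ with hfdef
  -- S is nontrivial
  obtain ⟨s, hsS, hsne⟩ := hbne
  have hsne0 : s ≠ 0 := by
    intro h
    apply hsne
    rw [h]
    simp
  haveI : Nontrivial ↥S := nontrivial_of_ne ⟨s, hsS⟩ 0 (by
    intro h
    exact hsne0 (congrArg Subtype.val h))
  -- eigenvalue of f
  obtain ⟨μ, hμ⟩ := Module.End.exists_eigenvalue f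
  obtain ⟨v, hv⟩ := hμ.exists_hasEigenvector
  have hveq : Rb (Rb (v : L)) = μ • Rb (v : L) := by
    have h1 : f v = μ • v := hv.apply_eq_smul
    have h2 : Θ₂ v = e (μ • v) := by
      rw [hfdef] at h1
      have := congrArg e h1
      simpa using this
    have h3 : (Θ₂ v : L) = μ • (e v : L) := by
      rw [h2, map_smul]
      rfl
    have h4 : (e v : L) = Rb (v : L) := rfl
    rw [hΘ₂app, h4] at h3
    exact h3
  -- eigenspace is an ideal of S, hence all of S
  have heig : ∀ x ∈ S, Rb (Rb x) = μ • Rb x := by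
    set g : Module.End ℂ L := Rb ∘ₗ Rb - μ • Rb with hgdef
    have hgapp : ∀ x : L, g x = Rb (Rb x) - μ • Rb x := fun x => rfl
    set K : Submodule ℂ L := S ⊓ LinearMap.ker g with hKdef
    have hKideal : IsIdealIn br S K := by
      constructor
      · exact inf_le_left
      · rintro u ⟨huS, huK⟩ y hyS
        have huK' : Rb (Rb u) = μ • Rb u := by
          have h0 : g u = 0 := huK
          rw [hgapp] at h0
          exact sub_eq_zero.mp h0
        have h1 : br u y ∈ K := by
          refine ⟨hSclosed u huS y hyS, ?_⟩
          show g (br u y) = 0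
          rw [hgapp, heq2 u huS y hyS, huK', heq1 u huS y hyS, map_smul]
          simp
        have h2 : br y u ∈ K := by
          have : br y u = -br u y := by rw [hSanti y hyS u huS]
          rw [this]
          exact K.neg_mem h1
        exact ⟨h1, h2⟩
    rcases hSsimple.2 K hKideal with h | h
    · exfalso
      have hvK : (v : L) ∈ K := by
        refine ⟨v.2, ?_⟩
        show g (v : L) = 0
        rw [hgapp, hveq]
        simp
      rw [h] at hvK
      exact hv.2 (Subtype.ext hvK)
    · intro x hxS
      have hxK : x ∈ K := by rw [h]; exact hxS
      have h0 : g x = 0 := hxK.2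
      rw [hgapp] at h0
      exact sub_eq_zero.mp h0
  -- nilpotency of Rb
  obtain ⟨n, hn⟩ := hN.2.1
  have hRbN : ∀ x : L, Rb x ∈ N := fun x => ((hN.1 b hb x).2)
  have hlcs : ∀ k, ∀ x : L, (Rb ^ (k + 1)) x ∈ lcs br N k := by
    intro k
    induction k with
    | zero => intro x; simpa [lcs] using hRbN x
    | succ m ih =>
      intro x
      have h1 : (Rb ^ (m + 2)) x = Rb ((Rb ^ (m + 1)) x) := by
        rw [pow_succ' Rb (m + 1)]
        rfl
      rw [h1]
      show br ((Rb ^ (m + 1)) x) b ∈ brSpan br (lcs br N m) N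
      exact Submodule.subset_span ⟨_, ih x, b, hb, rfl⟩
  -- iterates of Rb on S
  have hiter : ∀ k, ∀ x ∈ S, (Rb ^ (k + 1)) x = μ ^ k • Rb x := by
    intro k
    induction k with
    | zero => intro x _; simp
    | succ m ih =>
      intro x hxS
      have h1 : (Rb ^ (m + 2)) x = Rb ((Rb ^ (m + 1)) x) := by
        rw [pow_succ' Rb (m + 1)]
        rfl
      rw [h1, ih x hxS, map_smul, heig x hxS, smul_smul, ← pow_succ]
  -- μ = 0
  have hμ0 : μ = 0 := by
    have h1 : (Rb ^ (n + 1)) s ∈ lcs br N n := hlcs n s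
    rw [hn] at h1
    have h1' : (Rb ^ (n + 1)) s = 0 := h1
    have h2 : (Rb ^ (n + 2)) s = 0 := by
      have : (Rb ^ (n + 2)) s = Rb ((Rb ^ (n + 1)) s) := by
        rw [pow_succ' Rb (n + 1)]
        rfl
      rw [this, h1', map_zero]
    rw [hiter (n + 1) s hsS] at h2
    have h3 : μ ^ (n + 1) = 0 := by
      by_contra hne
      exact hsne (by simpa [hne, hRb] using (smul_eq_zero.mp h2))
    exact pow_eq_zero_iff (Nat.succ_ne_zero n) |>.mp h3
  intro x hxS
  have := heig x hxS
  rw [hμ0] at this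
  simpa [hRb] using this
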